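/- Suppose H₁⁺, H₂⁺ are closed subspaces of Hilbert spaces H₁, H₂ with bounded symmetric involutions J₁, J₂ such that (J₁f, f)₁ ≥ κ₁‖f‖₁² for all f ∈ H₁⁺ and (J₂g, g)₂ ≥ κ₂‖g‖₂² for all g ∈ H₂⁺, with κ₁, κ₂ > 0. Then for every u in the closed tensor product subspace H₁⁺ ⊗ H₂⁺ of H₁ ⊗ H₂, one has ((J₁⊗J₂)u, u) ≥ κ₁κ₂‖u‖². -/

import Mathlib

open scoped InnerProductSpace

open scoped ComplexOrder
open Matrix

lemma aux_swap3 {n : Type*} [Fintype n] (t : n → n → n → ℂ) :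
    (∑ i, ∑ j, ∑ k, t i j k) = ∑ k, ∑ i, ∑ j, t i j k := by
  have h1 : ∀ i, (∑ j, ∑ k, t i j k) = ∑ k, ∑ j, t i j k := fun i => Finset.sum_comm
  simp_rw [h1]
  exact Finset.sum_comm

/-- Schur-product-type inequality: the full sum of the entrywise product of two
PSD complex matrices is nonnegative. -/
lemma aux_schur_sum {n : Type*} [Fintype n] {P Q : Matrix n n ℂ}
    (hP : P.PosSemidef) (hQ : Q.PosSemidef) :
    0 ≤ ∑ i, ∑ j, P i j * Q i j := by
  obtain ⟨B, rfl⟩ : ∃ B : Matrix n n ℂ, Q = Bᴴ * B := by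
    classical
    open scoped MatrixOrder in exact CStarAlgebra.nonneg_iff_eq_star_mul_self.mp hQ.nonneg
  have key : ∑ i, ∑ j, P i j * (Bᴴ * B) i j
      = ∑ i, ∑ j, ∑ k, star (B k i) * (P i j * B k j) := by
    simp_rw [Matrix.mul_apply, Matrix.conjTranspose_apply, Finset.mul_sum]
    refine Finset.sum_congr rfl fun i _ => Finset.sum_congr rfl fun j _ =>
      Finset.sum_congr rfl fun k _ => by ring
  rw [key, aux_swap3]
  refine Finset.sum_nonneg fun k _ => ?_
  have := hP.dotProduct_mulVec_nonneg (fun i => B k i)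
  simpa [dotProduct, Matrix.mulVec, Finset.mul_sum, mul_assoc] using this

/-- Quadratic form expansion of a linear map applied to a finite sum. -/
lemma aux_quadform {E : Type*} [NormedAddCommGroup E] [InnerProductSpace ℂ E]
    {ι : Type*} [Fintype ι] (T : E →L[ℂ] E) (f : ι → E) (x : ι → ℂ) :
    ⟪T (∑ i, x i • f i), ∑ j, x j • f j⟫_ℂ
      = ∑ i, ∑ j, star (x i) * (⟪T (f i), f j⟫_ℂ * x j) := by
  rw [map_sum, sum_inner]
  refine Finset.sum_congr rfl fun i _ => ?_
  rw [inner_sum]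
  refine Finset.sum_congr rfl fun j _ => ?_
  rw [T.map_smul, inner_smul_left, inner_smul_right, starRingEnd_apply]
  ring

/-- The matrix `(⟪T f i, f j⟫ - κ ⟪f i, f j⟫)` is PSD when the quadratic form
of the symmetric operator `T` dominates `κ ‖·‖²` on a submodule containing the `f i`. -/
lemma aux_psd_form {E : Type*} [NormedAddCommGroup E] [InnerProductSpace ℂ E]
    {ι : Type*} [Fintype ι] (T : E →L[ℂ] E)
    (hsym : ∀ x y : E, ⟪T x, y⟫_ℂ = ⟪x, T y⟫_ℂ)
    (κ : ℝ) (p : Submodule ℂ E)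
    (hb : ∀ x ∈ p, κ * ‖x‖ ^ 2 ≤ (⟪T x, x⟫_ℂ).re)
    (f : ι → E) (hf : ∀ i, f i ∈ p) :
    (Matrix.of (fun i j => ⟪T (f i), f j⟫_ℂ)
      - (κ : ℂ) • Matrix.of (fun i j => ⟪f i, f j⟫_ℂ)).PosSemidef := by
  refine Matrix.PosSemidef.of_dotProduct_mulVec_nonneg ?_ ?_
  · -- Hermitian
    ext i j
    simp only [Matrix.conjTranspose_apply, Matrix.sub_apply, Matrix.smul_apply,
      Matrix.of_apply, star_sub, star_mul', smul_eq_mul]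
    have e1 : star ⟪T (f j), f i⟫_ℂ = ⟪T (f i), f j⟫_ℂ := by
      rw [← starRingEnd_apply, inner_conj_symm, ← hsym]
    have e2 : star ⟪f j, f i⟫_ℂ = ⟪f i, f j⟫_ℂ := by
      rw [← starRingEnd_apply, inner_conj_symm]
    rw [e1, e2, Complex.star_def, Complex.conj_ofReal]
  · intro x
    set v : E := ∑ i, x i • f i with hv
    have hvp : v ∈ p := Submodule.sum_mem _ fun i _ => Submodule.smul_mem _ _ (hf i)
    have hTv : star x ⬝ᵥ ((Matrix.of (fun i j => ⟪T (f i), f j⟫_ℂ)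
        - (κ : ℂ) • Matrix.of (fun i j => ⟪f i, f j⟫_ℂ)) *ᵥ x)
        = ⟪T v, v⟫_ℂ - (κ : ℂ) * ⟪v, v⟫_ℂ := by
      rw [hv, aux_quadform]
      have h1 : ⟪(∑ i, x i • f i), ∑ j, x j • f j⟫_ℂ
          = ∑ i, ∑ j, star (x i) * (⟪f i, f j⟫_ℂ * x j) := by
        simpa using aux_quadform (1 : E →L[ℂ] E) f x
      rw [h1]
      simp only [dotProduct, Matrix.mulVec, Matrix.sub_apply, Matrix.smul_apply,
        Matrix.of_apply, Pi.star_apply, smul_eq_mul, Finset.mul_sum,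
        Finset.sum_mul, ← Finset.sum_sub_distrib]
      refine Finset.sum_congr rfl fun i _ => Finset.sum_congr rfl fun j _ => by ring
    rw [hTv]
    have him : (⟪T v, v⟫_ℂ).im = 0 := by
      have h2 : (starRingEnd ℂ) ⟪T v, v⟫_ℂ = ⟪T v, v⟫_ℂ := by
        rw [inner_conj_symm, ← hsym]
      exact Complex.conj_eq_iff_im.mp h2
    have hvv : ⟪v, v⟫_ℂ = ((‖v‖ ^ 2 : ℝ) : ℂ) := by
      rw [inner_self_eq_norm_sq_to_K]; norm_cast
    have hre : κ * ‖v‖ ^ 2 ≤ (⟪T v, v⟫_ℂ).re := hb v hvp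
    have heq : ⟪T v, v⟫_ℂ - (κ : ℂ) * ⟪v, v⟫_ℂ
        = (((⟪T v, v⟫_ℂ).re - κ * ‖v‖ ^ 2 : ℝ) : ℂ) := by
      rw [hvv]
      apply Complex.ext <;> simp [him]
    rw [heq]
    rw [Complex.zero_le_real]
    linarith
lemma aux_psd_smul {n : Type*} [Fintype n] {M : Matrix n n ℂ}
    (hM : M.PosSemidef) (κ : ℝ) (hκ : 0 ≤ κ) : ((κ : ℂ) • M).PosSemidef := by
  refine Matrix.PosSemidef.of_dotProduct_mulVec_nonneg ?_ ?_
  · rw [Matrix.IsHermitian, Matrix.conjTranspose_smul, hM.1, Complex.star_def,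
      Complex.conj_ofReal]
  · intro x
    rw [Matrix.smul_mulVec]
    have h1 : star x ⬝ᵥ (κ : ℂ) • (M *ᵥ x) = (κ : ℂ) * (star x ⬝ᵥ M *ᵥ x) := by
      simp [dotProduct, Finset.mul_sum, smul_eq_mul]
      exact Finset.sum_congr rfl fun i _ => by ring
    rw [h1]
    exact mul_nonneg (by exact_mod_cast Complex.zero_le_real.mpr hκ) (hM.dotProduct_mulVec_nonneg x)

lemma aux_psd_gram {E : Type*} [NormedAddCommGroup E] [InnerProductSpace ℂ E]
    {ι : Type*} [Fintype ι] (f : ι → E) :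
    (Matrix.of (fun i j => ⟪f i, f j⟫_ℂ)).PosSemidef := by
  have := aux_psd_form (1 : E →L[ℂ] E) (fun x y => by simp) 0 ⊤
    (fun x _ => by
      have hx : ⟪x, x⟫_ℂ = ((‖x‖ ^ 2 : ℝ) : ℂ) := by
        rw [inner_self_eq_norm_sq_to_K]; norm_cast
      rw [ContinuousLinearMap.one_apply, hx, Complex.ofReal_re, zero_mul]
      positivity) f (fun i => trivial)
  simpa using this

/-- The key finite-rank inequality. -/
lemma aux_key {H₁ H₂ H : Type*}
    [NormedAddCommGroup H₁] [InnerProductSpace ℂ H₁]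
    [NormedAddCommGroup H₂] [InnerProductSpace ℂ H₂]
    [NormedAddCommGroup H] [InnerProductSpace ℂ H]
    (tmul : H₁ →ₗ[ℂ] H₂ →ₗ[ℂ] H)
    (hinner : ∀ (f₁ f₂ : H₁) (h₁ h₂ : H₂),
      ⟪tmul f₁ h₁, tmul f₂ h₂⟫_ℂ = ⟪f₁, f₂⟫_ℂ * ⟪h₁, h₂⟫_ℂ)
    (J₁ : H₁ →L[ℂ] H₁) (hsym₁ : ∀ x y : H₁, ⟪J₁ x, y⟫_ℂ = ⟪x, J₁ y⟫_ℂ)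
    (J₂ : H₂ →L[ℂ] H₂) (hsym₂ : ∀ x y : H₂, ⟪J₂ x, y⟫_ℂ = ⟪x, J₂ y⟫_ℂ)
    (J : H →L[ℂ] H)
    (hJ : ∀ (f : H₁) (h : H₂), J (tmul f h) = tmul (J₁ f) (J₂ h))
    (H₁p : Submodule ℂ H₁) (H₂p : Submodule ℂ H₂)
    (κ₁ κ₂ : ℝ) (hκ₁ : 0 ≤ κ₁) (hκ₂ : 0 ≤ κ₂)
    (h₁ : ∀ f ∈ H₁p, κ₁ * ‖f‖ ^ 2 ≤ (⟪J₁ f, f⟫_ℂ).re)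
    (h₂ : ∀ g ∈ H₂p, κ₂ * ‖g‖ ^ 2 ≤ (⟪J₂ g, g⟫_ℂ).re)
    {ι : Type*} [Fintype ι] (f : ι → H₁) (hf : ∀ i, f i ∈ H₁p)
    (g : ι → H₂) (hg : ∀ i, g i ∈ H₂p) :
    κ₁ * κ₂ * ‖∑ i, tmul (f i) (g i)‖ ^ 2
      ≤ (⟪J (∑ i, tmul (f i) (g i)), ∑ i, tmul (f i) (g i)⟫_ℂ).re := by
  set u : H := ∑ i, tmul (f i) (g i) with hu
  set A : Matrix ι ι ℂ := Matrix.of (fun i j => ⟪J₁ (f i), f j⟫_ℂ) with hA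
  set F : Matrix ι ι ℂ := Matrix.of (fun i j => ⟪f i, f j⟫_ℂ) with hF
  set B : Matrix ι ι ℂ := Matrix.of (fun i j => ⟪J₂ (g i), g j⟫_ℂ) with hB
  set G : Matrix ι ι ℂ := Matrix.of (fun i j => ⟪g i, g j⟫_ℂ) with hG
  have hAF : (A - (κ₁ : ℂ) • F).PosSemidef := aux_psd_form J₁ hsym₁ κ₁ H₁p h₁ f hf
  have hBG : (B - (κ₂ : ℂ) • G).PosSemidef := aux_psd_form J₂ hsym₂ κ₂ H₂p h₂ g hg
  have hFp : F.PosSemidef := aux_psd_gram f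
  have hGp : G.PosSemidef := aux_psd_gram g
  have hBp : B.PosSemidef := by
    have h0 : ∀ x ∈ H₂p, (0:ℝ) * ‖x‖ ^ 2 ≤ (⟪J₂ x, x⟫_ℂ).re := fun x hx => by
      have := h₂ x hx
      nlinarith [sq_nonneg ‖x‖]
    have := aux_psd_form J₂ hsym₂ 0 H₂p h0 g hg
    simpa using this
  have hκF : ((κ₁ : ℂ) • F).PosSemidef := aux_psd_smul hFp κ₁ hκ₁
  have s1 : 0 ≤ ∑ i, ∑ j, (A - (κ₁ : ℂ) • F) i j * B i j := aux_schur_sum hAF hBp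
  have s2 : 0 ≤ ∑ i, ∑ j, ((κ₁ : ℂ) • F) i j * (B - (κ₂ : ℂ) • G) i j :=
    aux_schur_sum hκF hBG
  have hcomb : (∑ i, ∑ j, (A - (κ₁ : ℂ) • F) i j * B i j)
      + (∑ i, ∑ j, ((κ₁ : ℂ) • F) i j * (B - (κ₂ : ℂ) • G) i j)
      = (∑ i, ∑ j, A i j * B i j)
        - ((κ₁ : ℂ) * (κ₂ : ℂ)) * ∑ i, ∑ j, F i j * G i j := by
    simp only [Matrix.sub_apply, Matrix.smul_apply, smul_eq_mul, Finset.mul_sum,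
      ← Finset.sum_add_distrib, ← Finset.sum_sub_distrib]
    exact Finset.sum_congr rfl fun i _ => Finset.sum_congr rfl fun j _ => by ring
  have s3 : 0 ≤ (∑ i, ∑ j, A i j * B i j)
      - ((κ₁ : ℂ) * (κ₂ : ℂ)) * ∑ i, ∑ j, F i j * G i j :=
    hcomb ▸ add_nonneg s1 s2
  have eJ : ⟪J u, u⟫_ℂ = ∑ i, ∑ j, A i j * B i j := by
    rw [hu, map_sum, sum_inner]
    refine Finset.sum_congr rfl fun i _ => ?_
    rw [inner_sum]
    refine Finset.sum_congr rfl fun j _ => ?_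
    rw [hJ, hinner]
    rfl
  have eN : ⟪u, u⟫_ℂ = ∑ i, ∑ j, F i j * G i j := by
    rw [hu, sum_inner]
    refine Finset.sum_congr rfl fun i _ => ?_
    rw [inner_sum]
    refine Finset.sum_congr rfl fun j _ => ?_
    rw [hinner]
    rfl
  have huu : ⟪u, u⟫_ℂ = ((‖u‖ ^ 2 : ℝ) : ℂ) := by
    rw [inner_self_eq_norm_sq_to_K]; norm_cast
  have hmul : ((κ₁ : ℂ) * (κ₂ : ℂ)) * ∑ i, ∑ j, F i j * G i j
      = ((κ₁ * κ₂ * ‖u‖ ^ 2 : ℝ) : ℂ) := by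
    rw [← eN, huu]; push_cast; ring
  rw [hmul, eJ.symm] at s3
  have := (Complex.le_def.mp s3).1
  simp only [Complex.zero_re, Complex.sub_re, Complex.ofReal_re] at this
  linarith
/-- if `(J₁ f, f) ≥ κ₁ ‖f‖²` on a closed subspace `H₁⁺` and
`(J₂ g, g) ≥ κ₂ ‖g‖²` on a closed subspace `H₂⁺`, then on the closed span of
the elementary tensors `f ⊗ g`, `f ∈ H₁⁺`, `g ∈ H₂⁺`, one has
`((J₁ ⊗ J₂) u, u) ≥ κ₁ κ₂ ‖u‖²`. -/
theorem tensor_uniformly_positive_subspace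
    {H₁ H₂ H : Type*}
    [NormedAddCommGroup H₁] [InnerProductSpace ℂ H₁] [CompleteSpace H₁]
    [NormedAddCommGroup H₂] [InnerProductSpace ℂ H₂] [CompleteSpace H₂]
    [NormedAddCommGroup H] [InnerProductSpace ℂ H] [CompleteSpace H]
    (tmul : H₁ →ₗ[ℂ] H₂ →ₗ[ℂ] H)
    (hinner : ∀ (f₁ f₂ : H₁) (h₁ h₂ : H₂),
      ⟪tmul f₁ h₁, tmul f₂ h₂⟫_ℂ = ⟪f₁, f₂⟫_ℂ * ⟪h₁, h₂⟫_ℂ)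
    (J₁ : H₁ →L[ℂ] H₁) (hJ₁sa : IsSelfAdjoint J₁) (hJ₁2 : J₁ ∘L J₁ = 1)
    (J₂ : H₂ →L[ℂ] H₂) (hJ₂sa : IsSelfAdjoint J₂) (hJ₂2 : J₂ ∘L J₂ = 1)
    (J : H →L[ℂ] H)
    (hJ : ∀ (f : H₁) (h : H₂), J (tmul f h) = tmul (J₁ f) (J₂ h))
    (H₁p : Submodule ℂ H₁) (hH₁p : IsClosed (H₁p : Set H₁))
    (H₂p : Submodule ℂ H₂) (hH₂p : IsClosed (H₂p : Set H₂))
    (κ₁ κ₂ : ℝ) (hκ₁ : 0 < κ₁) (hκ₂ : 0 < κ₂)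
    (h₁ : ∀ f ∈ H₁p, κ₁ * ‖f‖ ^ 2 ≤ (⟪J₁ f, f⟫_ℂ).re)
    (h₂ : ∀ g ∈ H₂p, κ₂ * ‖g‖ ^ 2 ≤ (⟪J₂ g, g⟫_ℂ).re)
    (u : H)
    (hu : u ∈ closure
      (Submodule.span ℂ {x : H | ∃ f ∈ H₁p, ∃ g ∈ H₂p, x = tmul f g} : Set H)) :
    κ₁ * κ₂ * ‖u‖ ^ 2 ≤ (⟪J u, u⟫_ℂ).re := by
  have hsym₁ : ∀ x y : H₁, ⟪J₁ x, y⟫_ℂ = ⟪x, J₁ y⟫_ℂ := fun x y =>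
    hJ₁sa.isSymmetric x y
  have hsym₂ : ∀ x y : H₂, ⟪J₂ x, y⟫_ℂ = ⟪x, J₂ y⟫_ℂ := fun x y =>
    hJ₂sa.isSymmetric x y
  set S : Set H := {x : H | ∃ f ∈ H₁p, ∃ g ∈ H₂p, x = tmul f g} with hS
  -- the set where the inequality holds is closed
  have hcl : IsClosed {v : H | κ₁ * κ₂ * ‖v‖ ^ 2 ≤ (⟪J v, v⟫_ℂ).re} := by
    apply isClosed_le
    · fun_prop
    · exact Complex.continuous_re.comp
        (continuous_inner.comp ((J.continuous).prodMk continuous_id))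
  -- the inequality holds on the span
  have hspan : (Submodule.span ℂ S : Set H)
      ⊆ {v : H | κ₁ * κ₂ * ‖v‖ ^ 2 ≤ (⟪J v, v⟫_ℂ).re} := by
    intro v hv
    rw [SetLike.mem_coe, Submodule.mem_span_set] at hv
    obtain ⟨c, hc, rfl⟩ := hv
    have hx : ∀ i : c.support, ∃ f' ∈ H₁p, ∃ g' ∈ H₂p, (i : H) = tmul f' g' :=
      fun i => hc i.2
    choose f' hf' g' hg' hfg using hx
    have hrep : c.sum (fun x r => r • x)
        = ∑ i : c.support, tmul (c i • f' i) (g' i) := by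
      rw [Finsupp.sum, ← Finset.sum_attach c.support (fun x => c x • x)]
      refine Finset.sum_congr rfl fun i _ => ?_
      rw [hfg i, _root_.map_smul, LinearMap.smul_apply]
    rw [Set.mem_setOf_eq, hrep]
    exact aux_key tmul hinner J₁ hsym₁ J₂ hsym₂ J hJ H₁p H₂p κ₁ κ₂ hκ₁.le hκ₂.le
      h₁ h₂ (fun i : c.support => c i.1 • f' i)
      (fun i => Submodule.smul_mem _ _ (hf' i)) g' hg'
  exact closure_minimal hspan hcl hu
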